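/- Let μ be a probability measure on {0,1}×{0,1}×{0,1} with coordinate random variables X, Y, Z, and suppose μ has full support, i.e. μ(X=i, Y=j, Z=k) > 0 for all i,j,k ∈ {0,1}. If X⊥Z, X⊥Y|Z and Y⊥Z|X all hold, then X, Y, Z are mutually independent. -/

import Mathlib

open MeasureTheory

/-- The sample space `{0,1} × {0,1} × {0,1}`. -/
abbrev Omega3 : Type := Fin 2 × Fin 2 × Fin 2

noncomputable section

/-- marginal `μ(X = i)` -/
def pX (μ : Measure Omega3) (i : Fin 2) : ENNReal := μ {ω | ω.1 = i}
/-- marginal `μ(Y = j)` -/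
def pY (μ : Measure Omega3) (j : Fin 2) : ENNReal := μ {ω | ω.2.1 = j}
/-- marginal `μ(Z = k)` -/
def pZ (μ : Measure Omega3) (k : Fin 2) : ENNReal := μ {ω | ω.2.2 = k}
/-- `μ(X = i, Y = j)` -/
def pXY (μ : Measure Omega3) (i j : Fin 2) : ENNReal := μ {ω | ω.1 = i ∧ ω.2.1 = j}
/-- `μ(X = i, Z = k)` -/
def pXZ (μ : Measure Omega3) (i k : Fin 2) : ENNReal := μ {ω | ω.1 = i ∧ ω.2.2 = k}
/-- `μ(Y = j, Z = k)` -/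
def pYZ (μ : Measure Omega3) (j k : Fin 2) : ENNReal := μ {ω | ω.2.1 = j ∧ ω.2.2 = k}
/-- `μ(X = i, Y = j, Z = k)` -/
def pXYZ (μ : Measure Omega3) (i j k : Fin 2) : ENNReal :=
  μ {ω | ω.1 = i ∧ ω.2.1 = j ∧ ω.2.2 = k}

/-- `X ⊥ Y` -/
def IndXY (μ : Measure Omega3) : Prop := ∀ i j, pXY μ i j = pX μ i * pY μ j
/-- `X ⊥ Z` -/
def IndXZ (μ : Measure Omega3) : Prop := ∀ i k, pXZ μ i k = pX μ i * pZ μ k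
/-- `Y ⊥ Z` -/
def IndYZ (μ : Measure Omega3) : Prop := ∀ j k, pYZ μ j k = pY μ j * pZ μ k
/-- `X ⊥ Y | Z` -/
def CondXY_Z (μ : Measure Omega3) : Prop :=
  ∀ i j k, pXYZ μ i j k * pZ μ k = pXZ μ i k * pYZ μ j k
/-- `X ⊥ Z | Y` -/
def CondXZ_Y (μ : Measure Omega3) : Prop :=
  ∀ i j k, pXYZ μ i j k * pY μ j = pXY μ i j * pYZ μ j k
/-- `Y ⊥ Z | X` -/
def CondYZ_X (μ : Measure Omega3) : Prop :=
  ∀ i j k, pXYZ μ i j k * pX μ i = pXY μ i j * pXZ μ i k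
/-- `X ⊥ Y ⊥ Z` (mutual independence) -/
def MutualIndep (μ : Measure Omega3) : Prop :=
  ∀ i j k, pXYZ μ i j k = pX μ i * pY μ j * pZ μ k
/-- `X ⊥ (Y, Z)` (joint independence of `X` from the pair) -/
def JointX_YZ (μ : Measure Omega3) : Prop :=
  ∀ i j k, pXYZ μ i j k = pX μ i * pYZ μ j k
/-- `Y ⊥ (X, Z)` -/
def JointY_XZ (μ : Measure Omega3) : Prop :=
  ∀ i j k, pXYZ μ i j k = pY μ j * pXZ μ i k
/-- `Z ⊥ (X, Y)` -/
def JointZ_XY (μ : Measure Omega3) : Prop :=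
  ∀ i j k, pXYZ μ i j k = pZ μ k * pXY μ i j
/-- `μ` has full support on the eight atoms. -/
def FullSupport (μ : Measure Omega3) : Prop := ∀ i j k, 0 < pXYZ μ i j k

lemma meas_fst (i : Fin 2) : MeasurableSet {ω : Omega3 | ω.1 = i} :=
  (measurable_fst (measurableSet_singleton i))

lemma fin2_ne_zero {a : Fin 2} (h : ¬ a = 0) : a = 1 := by omega

lemma splitX (μ : Measure Omega3) (s : Set Omega3) (hs : MeasurableSet s) :
    μ ({ω | ω.1 = 0} ∩ s) + μ ({ω | ω.1 = 1} ∩ s) = μ s := by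
  have h := measure_inter_add_diff (μ := μ) s (meas_fst 0)
  have h1 : s ∩ {ω : Omega3 | ω.1 = 0} = {ω | ω.1 = 0} ∩ s := by
    ext ω; simp [Set.mem_inter_iff, and_comm]
  have h2 : s \ {ω : Omega3 | ω.1 = 0} = {ω | ω.1 = 1} ∩ s := by
    ext ω
    simp only [Set.mem_diff, Set.mem_inter_iff, Set.mem_setOf_eq]
    constructor
    · rintro ⟨hω, hn⟩; exact ⟨fin2_ne_zero hn, hω⟩
    · rintro ⟨h1, hω⟩; refine ⟨hω, ?_⟩; rw [h1]; exact one_ne_zero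
  rw [h1, h2] at h; exact h

lemma sumX (μ : Measure Omega3) [IsProbabilityMeasure μ] :
    pX μ 0 + pX μ 1 = 1 := by
  have := splitX μ Set.univ MeasurableSet.univ
  simpa [pX, measure_univ] using this

lemma sumXY (μ : Measure Omega3) (j : Fin 2) :
    pXY μ 0 j + pXY μ 1 j = pY μ j := by
  have := splitX μ {ω : Omega3 | ω.2.1 = j}
    (measurable_snd (measurable_fst (measurableSet_singleton j)))
  have e0 : ({ω : Omega3 | ω.1 = 0} ∩ {ω | ω.2.1 = j}) = {ω : Omega3 | ω.1 = 0 ∧ ω.2.1 = j} := rfl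
  have e1 : ({ω : Omega3 | ω.1 = 1} ∩ {ω | ω.2.1 = j}) = {ω : Omega3 | ω.1 = 1 ∧ ω.2.1 = j} := rfl
  rw [e0, e1] at this
  exact this

theorem stmt_8 (μ : Measure Omega3) [IsProbabilityMeasure μ]
    (hfs : FullSupport μ)
    (h1 : IndXZ μ) (h2 : CondXY_Z μ) (h3 : CondYZ_X μ) :
    MutualIndep μ := by
  -- positivity / finiteness of marginals
  have hsub : ∀ i j k : Fin 2, {ω : Omega3 | ω.1 = i ∧ ω.2.1 = j ∧ ω.2.2 = k} ⊆ {ω | ω.2.2 = k} := by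
    intro i j k ω hω; exact hω.2.2
  have hZpos : ∀ k : Fin 2, pZ μ k ≠ 0 := by
    intro k
    have := lt_of_lt_of_le (hfs 0 0 k) (measure_mono (hsub 0 0 k))
    exact ne_of_gt this
  have hZfin : ∀ k : Fin 2, pZ μ k ≠ ⊤ := fun k => measure_ne_top μ _
  have hXpos : ∀ i : Fin 2, pX μ i ≠ 0 := by
    intro i
    have hs : {ω : Omega3 | ω.1 = i ∧ ω.2.1 = 0 ∧ ω.2.2 = 0} ⊆ {ω | ω.1 = i} :=
      fun ω hω => hω.1
    exact ne_of_gt (lt_of_lt_of_le (hfs i 0 0) (measure_mono hs))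
  have hXfin : ∀ i : Fin 2, pX μ i ≠ ⊤ := fun i => measure_ne_top μ _
  -- step 1 : pXYZ = pX * pYZ
  have step1 : ∀ i j k, pXYZ μ i j k = pX μ i * pYZ μ j k := by
    intro i j k
    have h := h2 i j k
    rw [h1 i k] at h
    have h' : pXYZ μ i j k * pZ μ k = (pX μ i * pYZ μ j k) * pZ μ k := by
      rw [h]; ring
    exact (ENNReal.mul_left_inj (hZpos k) (hZfin k)).mp h'
  -- step 2 : pXY * pZ = pX * pYZ
  have step2 : ∀ i j k, pXY μ i j * pZ μ k = pX μ i * pYZ μ j k := by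
    intro i j k
    have h := h3 i j k
    rw [h1 i k, step1 i j k] at h
    have h' : (pXY μ i j * pZ μ k) * pX μ i = (pX μ i * pYZ μ j k) * pX μ i :=
      calc (pXY μ i j * pZ μ k) * pX μ i = pXY μ i j * (pX μ i * pZ μ k) := by ring
        _ = pX μ i * pYZ μ j k * pX μ i := h.symm
    exact (ENNReal.mul_left_inj (hXpos i) (hXfin i)).mp h'
  -- step 3 : pYZ = pY * pZ
  have step3 : ∀ j k, pYZ μ j k = pY μ j * pZ μ k := by
    intro j k
    have h : (pXY μ 0 j + pXY μ 1 j) * pZ μ k = (pX μ 0 + pX μ 1) * pYZ μ j k := by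
      rw [add_mul, add_mul, step2 0 j k, step2 1 j k]
    rw [sumXY μ j, sumX μ, one_mul] at h
    exact h.symm
  intro i j k
  rw [step1 i j k, step3 j k, mul_assoc]
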